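/- Let $k=\lfloor\sqrt n/2\rfloor$ and $b'=\frac{\log 2}{2}\cdot\frac{\sqrt n}{\log n}$. Then $\sum_{i=1}^{\lfloor (n-k)/2\rfloor} \binom{n}{i}\binom{n-i}{k} 2^{-i(n-i-k)/b'} \to 0$ as $n\to\infty$. -/

import Mathlib

open Filter Topology

lemma aux13 (n : ℕ) (hn : 49 ≤ n) :
    ∑ i ∈ Finset.Icc 1 ((n - ⌊Real.sqrt n / 2⌋₊) / 2),
        (n.choose i : ℝ) * ((n - i).choose ⌊Real.sqrt n / 2⌋₊ : ℝ) *
          (2 : ℝ) ^ (-((i * (n - i - ⌊Real.sqrt n / 2⌋₊) : ℕ) : ℝ) /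
            (Real.log 2 / 2 * (Real.sqrt n / Real.log n))) ≤ (n : ℝ)⁻¹ := by
  set k := ⌊Real.sqrt n / 2⌋₊ with hkdef
  set s := Real.sqrt n with hsdef
  have hn1 : (1:ℝ) ≤ (n:ℝ) := by
    have : 1 ≤ n := by omega
    exact_mod_cast this
  have hn0 : (0:ℝ) < (n:ℝ) := by linarith
  have hs7 : (7:ℝ) ≤ s := by
    have : Real.sqrt 49 ≤ s := Real.sqrt_le_sqrt (by exact_mod_cast hn)
    rwa [show (49:ℝ) = 7^2 by norm_num, Real.sqrt_sq (by norm_num : (0:ℝ) ≤ 7)] at this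
  have hs0 : (0:ℝ) < s := by linarith
  have hss : s * s = (n:ℝ) := Real.mul_self_sqrt (le_of_lt hn0)
  have hlogn : 0 < Real.log n := Real.log_pos (by exact_mod_cast (by omega : 1 < n))
  have hlog2 : 0 < Real.log 2 := Real.log_pos one_lt_two
  have hk2 : (k : ℝ) ≤ s / 2 := Nat.floor_le (by positivity)
  have hkn : k ≤ n := by
    have : (k:ℝ) ≤ (n:ℝ) := by nlinarith
    exact_mod_cast this
  have hterm : ∀ i ∈ Finset.Icc 1 ((n - k) / 2),
      (n.choose i : ℝ) * ((n - i).choose k : ℝ) *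
          (2 : ℝ) ^ (-((i * (n - i - k) : ℕ) : ℝ) /
            (Real.log 2 / 2 * (s / Real.log n)))
        ≤ (n:ℝ) ^ ((3:ℝ)/2 - s/2) := by
    intro i hi
    rw [Finset.mem_Icc] at hi
    obtain ⟨hi1, hi2⟩ := hi
    have h2i : 2 * i ≤ n - k := by
      have := (Nat.le_div_iff_mul_le (by norm_num : 0 < 2)).1 hi2
      omega
    have h2i' : 2 * (i:ℝ) ≤ (n:ℝ) - k := by
      have := h2i
      have h' : 2 * i + k ≤ n := by omega
      have : ((2*i + k : ℕ) : ℝ) ≤ (n:ℝ) := by exact_mod_cast h'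
      push_cast at this; linarith
    have hikn : i + k ≤ n := by omega
    have hi1' : (1:ℝ) ≤ (i:ℝ) := by exact_mod_cast hi1
    have hcast : (((n - i - k : ℕ)) : ℝ) = (n:ℝ) - i - k := by
      have : n - i - k = n - (i + k) := by omega
      rw [this, Nat.cast_sub hikn]; push_cast; ring
    have hmcast : (((i * (n - i - k) : ℕ)) : ℝ) = (i:ℝ) * ((n:ℝ) - i - k) := by
      push_cast [hcast]; ring
    -- rewrite the power of 2 as power of n
    have hpow : (2 : ℝ) ^ (-((i * (n - i - k) : ℕ) : ℝ) /
            (Real.log 2 / 2 * (s / Real.log n)))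
        = (n:ℝ) ^ (-(2 * ((i * (n - i - k) : ℕ) : ℝ)) / s) := by
      rw [Real.rpow_def_of_pos (by norm_num : (0:ℝ) < 2),
        Real.rpow_def_of_pos hn0]
      congr 1
      field_simp
    rw [hpow]
    have hA : (n.choose i : ℝ) ≤ (n:ℝ) ^ (i:ℝ) := by
      rw [Real.rpow_natCast]
      exact_mod_cast Nat.choose_le_pow n i
    have hB : ((n - i).choose k : ℝ) ≤ (n:ℝ) ^ (s/2) := by
      have h1 : ((n - i).choose k : ℝ) ≤ ((n:ℝ)) ^ (k:ℕ) := by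
        have : (n - i).choose k ≤ (n - i) ^ k := Nat.choose_le_pow _ _
        have h2 : (n-i)^k ≤ n^k := Nat.pow_le_pow_left (by omega) k
        exact_mod_cast this.trans h2
      calc ((n - i).choose k : ℝ) ≤ ((n:ℝ)) ^ (k:ℕ) := h1
        _ = (n:ℝ) ^ ((k:ℕ):ℝ) := (Real.rpow_natCast _ _).symm
        _ ≤ (n:ℝ) ^ (s/2) := Real.rpow_le_rpow_of_exponent_le hn1 hk2
    have hC : (0:ℝ) ≤ (n:ℝ) ^ (-(2 * ((i * (n - i - k) : ℕ) : ℝ)) / s) :=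
      Real.rpow_nonneg (le_of_lt hn0) _
    calc (n.choose i : ℝ) * ((n - i).choose k : ℝ) *
          (n:ℝ) ^ (-(2 * ((i * (n - i - k) : ℕ) : ℝ)) / s)
        ≤ ((n:ℝ) ^ (i:ℝ) * (n:ℝ) ^ (s/2)) *
          (n:ℝ) ^ (-(2 * ((i * (n - i - k) : ℕ) : ℝ)) / s) := by
          apply mul_le_mul_of_nonneg_right _ hC
          exact mul_le_mul hA hB (Nat.cast_nonneg _) (Real.rpow_nonneg (le_of_lt hn0) _)
      _ = (n:ℝ) ^ ((i:ℝ) + s/2 + (-(2 * ((i * (n - i - k) : ℕ) : ℝ)) / s)) := by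
          rw [← Real.rpow_add hn0, ← Real.rpow_add hn0]
      _ ≤ (n:ℝ) ^ ((3:ℝ)/2 - s/2) := by
          apply Real.rpow_le_rpow_of_exponent_le hn1
          rw [hmcast]
          have key : ((i:ℝ) + s/2 - (3/2 - s/2)) * s ≤ 2 * ((i:ℝ) * ((n:ℝ) - i - k)) := by
            nlinarith [mul_nonneg (sub_nonneg.2 hi1') (by nlinarith : (0:ℝ) ≤ s*s - 3*s/2),
              mul_le_mul_of_nonneg_left h2i' (by linarith : (0:ℝ) ≤ (i:ℝ)),
              mul_le_mul_of_nonneg_left hk2 (by linarith : (0:ℝ) ≤ (i:ℝ))]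
          have : (i:ℝ) + s/2 - (3/2 - s/2) ≤ 2 * ((i:ℝ) * ((n:ℝ) - i - k)) / s := by
            rw [le_div_iff₀ hs0]; linarith
          rw [neg_div]
          linarith
  have hsum := Finset.sum_le_card_nsmul (Finset.Icc 1 ((n - k) / 2)) _ _ hterm
  rw [Nat.card_Icc] at hsum
  have hcard : ((n - k) / 2 + 1 - 1 : ℕ) ≤ n := by omega
  have hb : (0:ℝ) ≤ (n:ℝ) ^ ((3:ℝ)/2 - s/2) := Real.rpow_nonneg (le_of_lt hn0) _
  calc _ ≤ ((n - k) / 2 + 1 - 1 : ℕ) • ((n:ℝ) ^ ((3:ℝ)/2 - s/2)) := hsum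
    _ = (((n - k) / 2 + 1 - 1 : ℕ) : ℝ) * ((n:ℝ) ^ ((3:ℝ)/2 - s/2)) := by
        rw [nsmul_eq_mul]
    _ ≤ (n:ℝ) * ((n:ℝ) ^ ((3:ℝ)/2 - s/2)) := by
        apply mul_le_mul_of_nonneg_right _ hb
        exact_mod_cast hcard
    _ = (n:ℝ) ^ ((1:ℝ) + ((3:ℝ)/2 - s/2)) := by
        rw [Real.rpow_add hn0, Real.rpow_one]
    _ ≤ (n:ℝ) ^ (-1:ℝ) := Real.rpow_le_rpow_of_exponent_le hn1 (by linarith)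
    _ = (n:ℝ)⁻¹ := Real.rpow_neg_one _

/-- With `k = ⌊√n/2⌋` and `b' = (log 2 / 2)·√n/log n`, the Erdős–Selfridge potential
of the cuts of `K_n` with `k` vertices removed,
`∑_{i=1}^{⌊(n-k)/2⌋} C(n,i)·C(n-i,k)·2^{-i(n-i-k)/b'}`, tends to `0`. -/
theorem stmt13 :
    Tendsto (fun n : ℕ =>
      ∑ i ∈ Finset.Icc 1 ((n - ⌊Real.sqrt n / 2⌋₊) / 2),
        (n.choose i : ℝ) * ((n - i).choose ⌊Real.sqrt n / 2⌋₊ : ℝ) *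
          (2 : ℝ) ^ (-((i * (n - i - ⌊Real.sqrt n / 2⌋₊) : ℕ) : ℝ) /
            (Real.log 2 / 2 * (Real.sqrt n / Real.log n))))
      atTop (nhds 0) := by
  apply squeeze_zero' (g := fun n : ℕ => (n:ℝ)⁻¹)
  · filter_upwards with n
    apply Finset.sum_nonneg
    intro i _
    positivity
  · filter_upwards [eventually_ge_atTop 49] with n hn
    exact aux13 n hn
  · exact tendsto_inv_atTop_nhds_zero_nat
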